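/- Let ‖·‖ be a norm on c₀₀ satisfying the Figiel–Johnson implicit equation. Let 3 ≤ m < n, r ∈ (0,1], δ > 0, and set x₀ = r(e_m + e_n). If y ∈ c₀₀ satisfies ‖y‖ ≤ 1 and |y_i − (x₀)_i| ≤ δ for every i ∈ {1,…,n}, then ‖y − P_n y‖ ≤ 2(1 − r + nδ), where P_n y is the restriction of y to coordinates 1,…,n. -/

import Mathlib

open Filter Topology

/-- The coordinatewise restriction of a finitely supported sequence to a finite index set. -/
noncomputable def restrF (E : Finset ℕ) (ξ : ℕ →₀ ℝ) : ℕ →₀ ℝ :=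
  Finsupp.filter (· ∈ E) ξ

/-- The sup-norm of a finitely supported sequence. -/
noncomputable def supNormF (ξ : ℕ →₀ ℝ) : ℝ := ⨆ i, |ξ i|

/-- The set of values appearing in the inner supremum of the Figiel–Johnson implicit
equation: all numbers `(1/2) ∑_{j<k} ‖E_j ξ‖` over chains `E 0 < ... < E (k-1)` of
nonempty finite sets with `k ≤ min (E 0)`. -/
def tsirelsonSet (nrm : (ℕ →₀ ℝ) → ℝ) (ξ : ℕ →₀ ℝ) : Set ℝ :=
  {r | ∃ (k : ℕ) (E : ℕ → Finset ℕ), 1 ≤ k ∧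
    (∀ j < k, (E j).Nonempty) ∧
    (∀ j, j + 1 < k → ∀ a ∈ E j, ∀ b ∈ E (j + 1), a < b) ∧
    (∀ i ∈ E 0, k ≤ i) ∧
    r = (1 / 2) * ∑ j ∈ Finset.range k, nrm (restrF (E j) ξ)}

/-- `nrm` is a norm on `c₀₀` satisfying the Figiel–Johnson implicit equation. -/
def IsTsirelsonNorm (nrm : (ℕ →₀ ℝ) → ℝ) : Prop :=
  (∀ ξ η, nrm (ξ + η) ≤ nrm ξ + nrm η) ∧
  (∀ (c : ℝ) (ξ), nrm (c • ξ) = |c| * nrm ξ) ∧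
  (∀ ξ, nrm ξ = 0 ↔ ξ = 0) ∧
  (∀ ξ, nrm ξ = max (supNormF ξ) (sSup (tsirelsonSet nrm ξ)))

lemma restrF_apply (E : Finset ℕ) (ξ : ℕ →₀ ℝ) (i : ℕ) :
    restrF E ξ i = if i ∈ E then ξ i else 0 := by
  simp [restrF, Finsupp.filter_apply]

lemma nrm_zero (nrm : (ℕ →₀ ℝ) → ℝ) (h : IsTsirelsonNorm nrm) : nrm 0 = 0 :=
  (h.2.2.1 0).2 rfl

lemma nrm_nonneg (nrm : (ℕ →₀ ℝ) → ℝ) (h : IsTsirelsonNorm nrm) (ξ : ℕ →₀ ℝ) :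
    0 ≤ nrm ξ := by
  have h1 := h.1 ξ (-ξ)
  have h2 : nrm (-ξ) = nrm ξ := by
    have := h.2.1 (-1) ξ
    simpa using this
  rw [add_neg_cancel, nrm_zero nrm h, h2] at h1
  linarith

lemma abs_le_supNormF (ξ : ℕ →₀ ℝ) (i : ℕ) : |ξ i| ≤ supNormF ξ := by
  apply le_ciSup (f := fun i => |ξ i|)
  refine ⟨∑ j ∈ ξ.support, |ξ j|, ?_⟩
  rintro _ ⟨j, rfl⟩
  show |ξ j| ≤ _
  by_cases hj : j ∈ ξ.support
  · exact Finset.single_le_sum (fun i _ => abs_nonneg (ξ i)) hj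
  · rw [Finsupp.notMem_support_iff.mp hj, abs_zero]
    exact Finset.sum_nonneg fun i _ => abs_nonneg _

lemma abs_le_nrm (nrm : (ℕ →₀ ℝ) → ℝ) (h : IsTsirelsonNorm nrm) (ξ : ℕ →₀ ℝ) (i : ℕ) :
    |ξ i| ≤ nrm ξ := by
  calc |ξ i| ≤ supNormF ξ := abs_le_supNormF ξ i
  _ ≤ nrm ξ := by rw [h.2.2.2 ξ]; exact le_max_left _ _

lemma nrm_sum_single_le (nrm : (ℕ →₀ ℝ) → ℝ) (h : IsTsirelsonNorm nrm)
    (s : Finset ℕ) (f : ℕ → ℝ) :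
    nrm (∑ i ∈ s, Finsupp.single i (f i)) ≤ ∑ i ∈ s, |f i| * nrm (Finsupp.single i 1) := by
  induction s using Finset.induction_on with
  | empty => simp [nrm_zero nrm h]
  | @insert a s' hx ih =>
    rw [Finset.sum_insert hx, Finset.sum_insert hx]
    calc nrm (Finsupp.single a (f a) + ∑ i ∈ s', Finsupp.single i (f i))
        ≤ nrm (Finsupp.single a (f a)) + nrm (∑ i ∈ s', Finsupp.single i (f i)) := h.1 _ _
      _ ≤ |f a| * nrm (Finsupp.single a 1) + ∑ i ∈ s', |f i| * nrm (Finsupp.single i 1) := by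
          have : Finsupp.single a (f a) = f a • Finsupp.single a (1:ℝ) := by
            rw [Finsupp.smul_single, smul_eq_mul, mul_one]
          rw [this, h.2.1]
          exact add_le_add le_rfl ih

lemma nrm_le_sum (nrm : (ℕ →₀ ℝ) → ℝ) (h : IsTsirelsonNorm nrm) (ξ : ℕ →₀ ℝ) :
    nrm ξ ≤ ∑ i ∈ ξ.support, |ξ i| * nrm (Finsupp.single i 1) := by
  have : ξ = ∑ i ∈ ξ.support, Finsupp.single i (ξ i) := by
    rw [← Finsupp.sum, Finsupp.sum_single]
  nth_rewrite 1 [this]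
  exact nrm_sum_single_le nrm h _ _

lemma chain_lt (E : ℕ → Finset ℕ) (k : ℕ)
    (hne : ∀ j < k, (E j).Nonempty)
    (hord : ∀ j, j + 1 < k → ∀ a ∈ E j, ∀ b ∈ E (j + 1), a < b) :
    ∀ j₂, j₂ < k → ∀ j₁, j₁ < j₂ → ∀ a ∈ E j₁, ∀ b ∈ E j₂, a < b := by
  intro j₂
  induction j₂ with
  | zero => intro _ j₁ h1; omega
  | succ j ih =>
    intro hj2 j₁ h1 a ha b hb
    rcases Nat.lt_succ_iff_lt_or_eq.mp h1 with h1' | rfl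
    · obtain ⟨c, hc⟩ := hne j (by omega)
      exact lt_trans (ih (by omega) j₁ h1' a ha c hc) (hord j hj2 c hc b hb)
    · exact hord j₁ hj2 a ha b hb

lemma mem_tsirelsonSet_le (nrm : (ℕ →₀ ℝ) → ℝ) (h : IsTsirelsonNorm nrm) (ξ : ℕ →₀ ℝ)
    {t : ℝ} (ht : t ∈ tsirelsonSet nrm ξ) :
    t ≤ (1/2) * ∑ i ∈ ξ.support, |ξ i| * nrm (Finsupp.single i 1) := by
  obtain ⟨k, E, hk, hne, hord, hmin, rfl⟩ := ht
  have hCnn : ∀ i ∈ ξ.support, 0 ≤ |ξ i| * nrm (Finsupp.single i 1) :=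
    fun i _ => mul_nonneg (abs_nonneg _) (nrm_nonneg nrm h _)
  have key : ∑ j ∈ Finset.range k, nrm (restrF (E j) ξ)
      ≤ ∑ i ∈ ξ.support, |ξ i| * nrm (Finsupp.single i 1) := by
    have hsub : ∀ j, (restrF (E j) ξ).support ⊆ ξ.support ∩ E j := by
      intro j i hi
      rw [Finsupp.mem_support_iff, restrF_apply] at hi
      by_cases hiE : i ∈ E j
      · rw [if_pos hiE] at hi
        exact Finset.mem_inter.mpr ⟨Finsupp.mem_support_iff.mpr hi, hiE⟩
      · rw [if_neg hiE] at hi; exact absurd rfl hi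
    calc ∑ j ∈ Finset.range k, nrm (restrF (E j) ξ)
        ≤ ∑ j ∈ Finset.range k, ∑ i ∈ (restrF (E j) ξ).support,
            |ξ i| * nrm (Finsupp.single i 1) := by
          apply Finset.sum_le_sum
          intro j _
          calc nrm (restrF (E j) ξ)
              ≤ ∑ i ∈ (restrF (E j) ξ).support,
                  |restrF (E j) ξ i| * nrm (Finsupp.single i 1) := nrm_le_sum nrm h _
            _ = ∑ i ∈ (restrF (E j) ξ).support, |ξ i| * nrm (Finsupp.single i 1) := by
                apply Finset.sum_congr rfl
                intro i hi
                have := hsub j hi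
                rw [restrF_apply, if_pos (Finset.mem_inter.mp this).2]
      _ = ∑ i ∈ (Finset.range k).biUnion (fun j => (restrF (E j) ξ).support),
            |ξ i| * nrm (Finsupp.single i 1) := by
          rw [Finset.sum_biUnion]
          intro j₁ hj₁ j₂ hj₂ hne'
          simp only [Finset.mem_coe, Finset.mem_range] at hj₁ hj₂
          apply Finset.disjoint_left.mpr
          intro i hi1 hi2
          have h1 := (Finset.mem_inter.mp (hsub j₁ hi1)).2
          have h2 := (Finset.mem_inter.mp (hsub j₂ hi2)).2
          rcases lt_or_gt_of_ne hne' with hlt | hlt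
          · exact lt_irrefl i (chain_lt E k hne hord j₂ hj₂ j₁ hlt i h1 i h2)
          · exact lt_irrefl i (chain_lt E k hne hord j₁ hj₁ j₂ hlt i h2 i h1)
      _ ≤ ∑ i ∈ ξ.support, |ξ i| * nrm (Finsupp.single i 1) := by
          apply Finset.sum_le_sum_of_subset_of_nonneg
          · intro i hi
            obtain ⟨j, _, hj⟩ := Finset.mem_biUnion.mp hi
            exact (Finset.mem_inter.mp (hsub j hj)).1
          · intro i hi _; exact hCnn i hi
  linarith

lemma tsirelson_bddAbove (nrm : (ℕ →₀ ℝ) → ℝ) (h : IsTsirelsonNorm nrm) (ξ : ℕ →₀ ℝ) :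
    BddAbove (tsirelsonSet nrm ξ) :=
  ⟨(1/2) * ∑ i ∈ ξ.support, |ξ i| * nrm (Finsupp.single i 1),
    fun _ ht => mem_tsirelsonSet_le nrm h ξ ht⟩

lemma mem_le_nrm (nrm : (ℕ →₀ ℝ) → ℝ) (h : IsTsirelsonNorm nrm) (ξ : ℕ →₀ ℝ)
    {t : ℝ} (ht : t ∈ tsirelsonSet nrm ξ) : t ≤ nrm ξ := by
  calc t ≤ sSup (tsirelsonSet nrm ξ) := le_csSup (tsirelson_bddAbove nrm h ξ) ht
    _ ≤ nrm ξ := by rw [h.2.2.2 ξ]; exact le_max_right _ _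

theorem tsirelson_tail_estimate (nrm : (ℕ →₀ ℝ) → ℝ) (h : IsTsirelsonNorm nrm)
    (m n : ℕ) (hm : 3 ≤ m) (hmn : m < n)
    (r δ : ℝ) (hr : 0 < r) (hr1 : r ≤ 1) (hδ : 0 < δ)
    (y : ℕ →₀ ℝ) (hy : nrm y ≤ 1)
    (hclose : ∀ i, 1 ≤ i → i ≤ n →
      |y i - (r • (Finsupp.single m (1 : ℝ) + Finsupp.single n (1 : ℝ))) i| ≤ δ) :
    nrm (y - Finsupp.filter (· ≤ n) y) ≤ 2 * (1 - r + n * δ) := by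
  set z : ℕ →₀ ℝ := y - Finsupp.filter (· ≤ n) y with hz
  have hzapp : ∀ i, z i = if i ≤ n then 0 else y i := by
    intro i
    rw [hz, Finsupp.sub_apply, Finsupp.filter_apply]
    by_cases hi : i ≤ n <;> simp [hi]
  have hnδ : δ ≤ n * δ := by
    have : (1:ℝ) ≤ n := by
      have : 1 ≤ n := by omega
      exact_mod_cast this
    nlinarith
  by_cases hz0 : z = 0
  · rw [hz0, nrm_zero nrm h]
    have : (0:ℝ) ≤ n * δ := le_trans hδ.le hnδ
    linarith
  -- z ≠ 0 : build the chain {m} < {n} < z.support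
  have hzsupp : ∀ i ∈ z.support, n < i := by
    intro i hi
    rw [Finsupp.mem_support_iff, hzapp] at hi
    by_contra hni
    push_neg at hni
    rw [if_pos hni] at hi
    exact hi rfl
  have hzne : z.support.Nonempty := Finsupp.support_nonempty_iff.mpr hz0
  set E : ℕ → Finset ℕ := fun j => if j = 0 then {m} else if j = 1 then {n} else z.support
    with hE
  have hmem : (1/2) * ∑ j ∈ Finset.range 3, nrm (restrF (E j) y) ∈ tsirelsonSet nrm y := by
    refine ⟨3, E, by omega, ?_, ?_, ?_, rfl⟩
    · intro j hjk
      interval_cases j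
      · exact ⟨m, by simp [hE]⟩
      · exact ⟨n, by simp [hE]⟩
      · simpa [hE] using hzne
    · intro j hjk a ha b hb
      have hj1 : j ≤ 1 := by omega
      interval_cases j
      · have ha' : a = m := by simpa [hE] using ha
        have hb' : b = n := by simpa [hE] using hb
        omega
      · have ha' : a = n := by simpa [hE] using ha
        have hb' : b ∈ z.support := by
          simp only [hE] at hb
          norm_num at hb
          exact Finsupp.mem_support_iff.mpr hb
        subst ha'
        exact hzsupp b hb' 
    · intro i hi
      simp only [hE, if_pos rfl, Finset.mem_singleton] at hi
      omega
  have ht1 : (1/2) * ∑ j ∈ Finset.range 3, nrm (restrF (E j) y) ≤ 1 :=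
    le_trans (mem_le_nrm nrm h y hmem) hy
  -- restrF (E 2) y = z
  have hE2 : restrF (E 2) y = z := by
    ext i
    rw [restrF_apply]
    have : E 2 = z.support := by simp [hE]
    rw [this]
    by_cases hi : i ∈ z.support
    · rw [if_pos hi]
      have hni := hzsupp i hi
      rw [hzapp, if_neg (by omega)]
    · rw [if_neg hi]
      exact (Finsupp.notMem_support_iff.mp hi).symm
  -- coordinate bounds at m and n
  have hxm : (r • (Finsupp.single m (1:ℝ) + Finsupp.single n (1:ℝ))) m = r := by
    rw [Finsupp.smul_apply, Finsupp.add_apply, Finsupp.single_eq_same,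
      Finsupp.single_eq_of_ne' (by omega : n ≠ m)]
    simp
  have hxn : (r • (Finsupp.single m (1:ℝ) + Finsupp.single n (1:ℝ))) n = r := by
    rw [Finsupp.smul_apply, Finsupp.add_apply, Finsupp.single_eq_same,
      Finsupp.single_eq_of_ne' (by omega : m ≠ n)]
    simp
  have hym : r - δ ≤ |y m| := by
    have := hclose m (by omega) (by omega)
    rw [hxm] at this
    have h1 : |r| - |y m| ≤ |r - y m| := abs_sub_abs_le_abs_sub r (y m)
    rw [abs_sub_comm, abs_of_pos hr] at h1
    linarith
  have hyn : r - δ ≤ |y n| := by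
    have := hclose n (by omega) le_rfl
    rw [hxn] at this
    have h1 : |r| - |y n| ≤ |r - y n| := abs_sub_abs_le_abs_sub r (y n)
    rw [abs_sub_comm, abs_of_pos hr] at h1
    linarith
  -- lower bounds for the first two terms
  have hE0 : |y m| ≤ nrm (restrF (E 0) y) := by
    have := abs_le_nrm nrm h (restrF (E 0) y) m
    rwa [restrF_apply, if_pos (by simp [hE])] at this
  have hE1 : |y n| ≤ nrm (restrF (E 1) y) := by
    have := abs_le_nrm nrm h (restrF (E 1) y) n
    rwa [restrF_apply, if_pos (by simp [hE])] at this
  have hsum : ∑ j ∈ Finset.range 3, nrm (restrF (E j) y)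
      = nrm (restrF (E 0) y) + nrm (restrF (E 1) y) + nrm (restrF (E 2) y) := by
    simp [Finset.sum_range_succ]
  rw [hsum, hE2] at ht1
  linarith
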